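/- Rational Vandermonde-type determinant: det( ((xᵢ − a₁)⋯(xᵢ − a_{n−j})) / ((xᵢ − b₁)⋯(xᵢ − b_{n−j+1})) )_{1≤i,j≤n} = (∏_{1≤i<j≤n} (aᵢ − bⱼ)(xᵢ − xⱼ)) / (∏_{i=1}^n ∏_{j=1}^n (xᵢ − bⱼ)). -/

import Mathlib

open Finset

section RationalVandermondeAux

variable {F : Type*} [Field F]

/-- Newton-expansion coefficients. -/
noncomputable def nUc (a b : ℕ → F) (n : ℕ) : ℕ → ℕ → ℕ → F
  | 0, j, s => if s = j then 1 else 0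
  | r+1, j, s => nUc a b n r (j+1) s + (b (n-j) - a (r+1)) * nUc a b n r j s

lemma nUc_eq_zero (a b : ℕ → F) (n : ℕ) :
    ∀ r j s : ℕ, s < j → nUc a b n r j s = 0 := by
  intro r
  induction r with
  | zero => intro j s h; simp [nUc, Nat.ne_of_lt h]
  | succ r ih =>
      intro j s h
      simp only [nUc, ih (j+1) s (h.trans (Nat.lt_succ_self j)), ih j s h, mul_zero, add_zero]

lemma nUc_diag (a b : ℕ → F) (n : ℕ) :
    ∀ r j : ℕ, nUc a b n r j j = ∏ k ∈ Icc 1 r, (b (n-j) - a k) := by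
  intro r
  induction r with
  | zero => intro j; simp [nUc]
  | succ r ih =>
      intro j
      rw [Finset.prod_Icc_succ_top (Nat.le_add_left 1 r)]
      simp only [nUc, nUc_eq_zero a b n r (j+1) j (Nat.lt_succ_self j), ih j, zero_add]
      ring

lemma gam_succ (b : ℕ → F) (n j : ℕ) (hj : j < n) (t : F) :
    ∏ k ∈ Icc (n+1-(j+1)) n, (t - b k) = (t - b (n-j)) * ∏ k ∈ Icc (n+1-j) n, (t - b k) := by
  have h1 : n + 1 - (j+1) = n - j := by omega
  have h2 : Icc (n-j) n = Ico (n-j) (n+1) := by rw [Finset.Ico_add_one_right_eq_Icc]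
  have h3 : Icc (n+1-j) n = Ico (n-j+1) (n+1) := by rw [Finset.Ico_add_one_right_eq_Icc]; congr 1; omega
  rw [h1, h2, h3, Finset.prod_eq_prod_Ico_succ_bot (by omega)]

lemma nUc_key (a b : ℕ → F) (n : ℕ) :
    ∀ r j : ℕ, r + j + 1 ≤ n → ∀ t : F,
      (∏ k ∈ Icc 1 r, (t - a k)) * ∏ k ∈ Icc (n+1-j) n, (t - b k)
        = ∑ s ∈ range n, (∏ k ∈ Icc (n+1-s) n, (t - b k)) * nUc a b n r j s := by
  intro r
  induction r with
  | zero =>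
      intro j hj t
      simp only [nUc, mul_ite, mul_one, mul_zero]
      rw [Finset.sum_ite_eq' (range n) j]
      simp [Finset.mem_range.mpr (by omega : j < n)]
  | succ r ih =>
      intro j hj t
      have h1 : (∏ k ∈ Icc 1 (r+1), (t - a k)) = (∏ k ∈ Icc 1 r, (t - a k)) * (t - a (r+1)) :=
        Finset.prod_Icc_succ_top (Nat.le_add_left 1 r) _
      have h2 : (t - a (r+1)) * ∏ k ∈ Icc (n+1-j) n, (t - b k)
          = (∏ k ∈ Icc (n+1-(j+1)) n, (t - b k))
            + (b (n-j) - a (r+1)) * ∏ k ∈ Icc (n+1-j) n, (t - b k) := by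
        rw [gam_succ b n j (by omega) t]; ring
      calc (∏ k ∈ Icc 1 (r+1), (t - a k)) * ∏ k ∈ Icc (n+1-j) n, (t - b k)
          = (∏ k ∈ Icc 1 r, (t - a k)) * ((t - a (r+1)) * ∏ k ∈ Icc (n+1-j) n, (t - b k)) := by
            rw [h1]; ring
        _ = (∏ k ∈ Icc 1 r, (t - a k)) * ∏ k ∈ Icc (n+1-(j+1)) n, (t - b k)
            + (b (n-j) - a (r+1)) * ((∏ k ∈ Icc 1 r, (t - a k)) * ∏ k ∈ Icc (n+1-j) n, (t - b k)) := by
            rw [h2]; ring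
        _ = (∑ s ∈ range n, (∏ k ∈ Icc (n+1-s) n, (t - b k)) * nUc a b n r (j+1) s)
            + (b (n-j) - a (r+1)) * ∑ s ∈ range n, (∏ k ∈ Icc (n+1-s) n, (t - b k)) * nUc a b n r j s := by
            rw [ih (j+1) (by omega) t, ih j (by omega) t]
        _ = ∑ s ∈ range n, (∏ k ∈ Icc (n+1-s) n, (t - b k)) * nUc a b n (r+1) j s := by
            rw [Finset.mul_sum, ← Finset.sum_add_distrib]
            refine Finset.sum_congr rfl fun s _ => ?_
            simp only [nUc]; ring

lemma prod_pairs_Ioi {M : Type*} [CommMonoid M] {n : ℕ} (f : Fin n → Fin n → M) :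
    ∏ p ∈ univ.filter (fun p : Fin n × Fin n => p.1 < p.2), f p.1 p.2
      = ∏ i : Fin n, ∏ j ∈ Ioi i, f i j := by
  rw [Finset.prod_sigma']
  refine Finset.prod_nbij' (fun p => ⟨p.1, p.2⟩) (fun x => (x.1, x.2)) ?_ ?_ ?_ ?_ ?_ <;>
    simp +contextual [Finset.mem_sigma, Finset.mem_Ioi]

lemma prod_pairs_Iio {M : Type*} [CommMonoid M] {n : ℕ} (f : Fin n → Fin n → M) :
    ∏ p ∈ univ.filter (fun p : Fin n × Fin n => p.1 < p.2), f p.1 p.2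
      = ∏ j : Fin n, ∏ i ∈ Iio j, f i j := by
  rw [Finset.prod_sigma']
  refine Finset.prod_nbij' (fun p => ⟨p.2, p.1⟩) (fun x => (x.2, x.1)) ?_ ?_ ?_ ?_ ?_ <;>
    simp +contextual [Finset.mem_sigma, Finset.mem_Iio]

end RationalVandermondeAux

/-- Rational Vandermonde-type determinant:
`det( ∏_{k=1}^{n−j}(xᵢ−a_k) / ∏_{k=1}^{n−j+1}(xᵢ−b_k) )
 = ∏_{i<j}(aᵢ−bⱼ)(xᵢ−xⱼ) / ∏_{i,j}(xᵢ−bⱼ)`,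
in any field where `xᵢ ≠ bⱼ` for all relevant `i, j`. -/
theorem rational_vandermonde_type_det {F : Type*} [Field F] (n : ℕ) (x : Fin n → F)
    (a b : ℕ → F)
    (hb : ∀ (i : Fin n), ∀ k ∈ Finset.Icc 1 n, x i ≠ b k) :
    Matrix.det (Matrix.of fun i j : Fin n =>
        (∏ k ∈ Finset.Icc 1 (n - (j.val + 1)), (x i - a k)) /
        (∏ k ∈ Finset.Icc 1 (n - j.val), (x i - b k))) =
      (∏ p ∈ Finset.univ.filter (fun p : Fin n × Fin n => p.1 < p.2),
          ((a (p.1.val + 1) - b (p.2.val + 1)) * (x p.1 - x p.2))) /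
      (∏ i : Fin n, ∏ j : Fin n, (x i - b (j.val + 1))) := by
  classical
  set M : Matrix (Fin n) (Fin n) F := Matrix.of fun i j : Fin n =>
      (∏ k ∈ Finset.Icc 1 (n - (j.val + 1)), (x i - a k)) /
      (∏ k ∈ Finset.Icc 1 (n - j.val), (x i - b k)) with hM
  set D : Fin n → F := fun i => ∏ k ∈ Icc 1 n, (x i - b k) with hD
  set N : Matrix (Fin n) (Fin n) F := Matrix.of fun i j : Fin n =>
      (∏ k ∈ Icc 1 (n - (j.val + 1)), (x i - a k)) *
        ∏ k ∈ Icc (n + 1 - j.val) n, (x i - b k) with hN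
  -- split of D
  have hsplit : ∀ (i j : Fin n), D i =
      (∏ k ∈ Icc 1 (n - j.val), (x i - b k)) * ∏ k ∈ Icc (n + 1 - j.val) n, (x i - b k) := by
    intro i j
    have h1 : Icc 1 (n - j.val) = Ioc 0 (n - j.val) := by rw [← Finset.Icc_add_one_left_eq_Ioc]; rfl
    have h2 : Icc (n + 1 - j.val) n = Ioc (n - j.val) n := by
      rw [← Finset.Icc_add_one_left_eq_Ioc]; congr 1; omega
    have h3 : Icc 1 n = Ioc 0 n := by rw [← Finset.Icc_add_one_left_eq_Ioc]; rfl
    rw [hD, h1, h2, h3, Finset.prod_Ioc_consecutive _ (Nat.zero_le _) (Nat.sub_le n j.val)]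
  have hdenom_ne : ∀ (i j : Fin n), (∏ k ∈ Icc 1 (n - j.val), (x i - b k)) ≠ 0 := by
    intro i j
    refine Finset.prod_ne_zero_iff.mpr fun k hk => sub_ne_zero.mpr (hb i k ?_)
    exact Finset.Icc_subset_Icc_right (Nat.sub_le n j.val) hk
  have hD_ne : ∀ i, D i ≠ 0 := fun i =>
    Finset.prod_ne_zero_iff.mpr fun k hk => sub_ne_zero.mpr (hb i k hk)
  -- N = D-rowscale of M
  have hNM : N = Matrix.of fun i j => D i * M i j := by
    ext i j
    have h := hdenom_ne i j
    simp only [hN, hM, Matrix.of_apply, hsplit i j]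
    field_simp
  have hdetNM : N.det = (∏ i, D i) * M.det := by rw [hNM]; exact Matrix.det_mul_column D M
  -- the polynomial basis matrix
  set Γ : Matrix (Fin n) (Fin n) F := Matrix.of fun i s : Fin n =>
      ∏ k ∈ Icc (n + 1 - s.val) n, (x i - b k) with hΓ
  set U : Matrix (Fin n) (Fin n) F := Matrix.of fun s j : Fin n =>
      nUc a b n (n - (j.val + 1)) j.val s.val with hU
  have hNfac : N = Γ * U := by
    ext i j
    rw [Matrix.mul_apply]
    have := nUc_key a b n (n - (j.val + 1)) j.val (by omega) (x i)
    rw [hN, Matrix.of_apply, this]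
    rw [← Fin.sum_univ_eq_sum_range
      (fun s => (∏ k ∈ Icc (n + 1 - s) n, (x i - b k)) * nUc a b n (n - (j.val + 1)) j.val s) n]
    rfl
  have hdetU : U.det = ∏ j : Fin n, ∏ k ∈ Icc 1 (n - (j.val + 1)), (b (n - j.val) - a k) := by
    rw [Matrix.det_of_lowerTriangular U ?_]
    · exact Finset.prod_congr rfl fun j _ => nUc_diag a b n (n - (j.val + 1)) j.val
    · intro s j hsj
      exact nUc_eq_zero a b n _ _ _ hsj
  -- det Γ = vandermonde
  have hdetΓ : Γ.det = ∏ i : Fin n, ∏ j ∈ Ioi i, (x j - x i) := by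
    have hp : ∀ s : Fin n, (∏ k ∈ Icc (n + 1 - s.val) n, (Polynomial.X - Polynomial.C (b k))).natDegree = s.val := by
      intro s
      rw [Polynomial.natDegree_prod_of_monic _ _ (fun k _ => Polynomial.monic_X_sub_C (b k))]
      simp only [Polynomial.natDegree_X_sub_C, Finset.sum_const, smul_eq_mul, mul_one,
        Nat.card_Icc]
      omega
    have hm : ∀ s : Fin n, (∏ k ∈ Icc (n + 1 - s.val) n, (Polynomial.X - Polynomial.C (b k))).Monic :=
      fun s => Polynomial.monic_prod_of_monic _ _ (fun k _ => Polynomial.monic_X_sub_C (b k))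
    have := Matrix.det_eval_matrixOfPolynomials_eq_det_vandermonde x
      (fun s : Fin n => ∏ k ∈ Icc (n + 1 - s.val) n, (Polynomial.X - Polynomial.C (b k))) hp hm
    rw [Matrix.det_vandermonde] at this
    have hΓeq : Γ = Matrix.of (fun i s : Fin n =>
        Polynomial.eval (x i) (∏ k ∈ Icc (n + 1 - s.val) n,
          (Polynomial.X - Polynomial.C (b k)))) := by
      ext i s
      simp [hΓ, Polynomial.eval_prod]
    rw [hΓeq]
    exact this.symm
  -- numerator reindexing
  have hnum : (∏ p ∈ Finset.univ.filter (fun p : Fin n × Fin n => p.1 < p.2),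
        ((a (p.1.val + 1) - b (p.2.val + 1)) * (x p.1 - x p.2)))
      = (∏ j : Fin n, ∏ k ∈ Icc 1 (n - (j.val + 1)), (b (n - j.val) - a k)) *
        ∏ i : Fin n, ∏ j ∈ Ioi i, (x j - x i) := by
    have e1 : ∀ p : Fin n × Fin n,
        (a (p.1.val + 1) - b (p.2.val + 1)) * (x p.1 - x p.2)
          = (b (p.2.val + 1) - a (p.1.val + 1)) * (x p.2 - x p.1) := by intro p; ring
    rw [Finset.prod_congr rfl (fun p _ => e1 p), Finset.prod_mul_distrib,
      prod_pairs_Iio (fun i j => b (j.val + 1) - a (i.val + 1)),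
      prod_pairs_Ioi (fun i j => x j - x i)]
    congr 1
    -- ∏ j, ∏ i ∈ Iio j, (b (j+1) - a (i+1)) = ∏ j, ∏ k ∈ Icc 1 (n-(j+1)), (b (n-j) - a k)
    have inner1 : ∀ j : Fin n, (∏ i ∈ Iio j, (b (j.val + 1) - a (i.val + 1)))
        = ∏ k ∈ range j.val, (b (j.val + 1) - a (k + 1)) := by
      intro j
      rw [← Nat.Iio_eq_range, ← Fin.map_valEmbedding_Iio, Finset.prod_map]
      rfl
    have inner2 : ∀ m : ℕ, (∏ k ∈ range m, (b (m + 1) - a (k + 1)))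
        = ∏ k ∈ Icc 1 m, (b (m + 1) - a k) := by
      intro m
      rw [show Icc 1 m = Ico 1 (m + 1) from (Finset.Ico_add_one_right_eq_Icc 1 m).symm,
        Finset.prod_Ico_eq_prod_range]
      simp [add_comm]
    calc (∏ j : Fin n, ∏ i ∈ Iio j, (b (j.val + 1) - a (i.val + 1)))
        = ∏ j : Fin n, ∏ k ∈ Icc 1 j.val, (b (j.val + 1) - a k) := by
          exact Finset.prod_congr rfl fun j _ => by rw [inner1 j, inner2 j.val]
      _ = ∏ j ∈ range n, ∏ k ∈ Icc 1 j, (b (j + 1) - a k) := by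
          rw [← Fin.prod_univ_eq_prod_range (fun j => ∏ k ∈ Icc 1 j, (b (j + 1) - a k)) n]
      _ = ∏ j ∈ range n, ∏ k ∈ Icc 1 (n - 1 - j), (b (n - 1 - j + 1) - a k) := by
          rw [Finset.prod_range_reflect (fun j => ∏ k ∈ Icc 1 j, (b (j + 1) - a k)) n]
      _ = ∏ j ∈ range n, ∏ k ∈ Icc 1 (n - (j + 1)), (b (n - j) - a k) := by
          refine Finset.prod_congr rfl fun j hj => ?_
          have hj' : j < n := Finset.mem_range.mp hj
          have h1 : n - 1 - j = n - (j + 1) := by omega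
          have h2 : n - 1 - j + 1 = n - j := by omega
          rw [h1, show n - (j + 1) + 1 = n - j from by omega]
      _ = ∏ j : Fin n, ∏ k ∈ Icc 1 (n - (j.val + 1)), (b (n - j.val) - a k) := by
          rw [Fin.prod_univ_eq_prod_range (fun j => ∏ k ∈ Icc 1 (n - (j + 1)), (b (n - j) - a k)) n]
  -- denominator reindexing
  have hden : (∏ i : Fin n, D i) = ∏ i : Fin n, ∏ j : Fin n, (x i - b (j.val + 1)) := by
    refine Finset.prod_congr rfl fun i _ => ?_
    show (∏ k ∈ Icc 1 n, (x i - b k)) = _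
    rw [show Icc 1 n = Ico 1 (n + 1) from (Finset.Ico_add_one_right_eq_Icc 1 n).symm,
      Finset.prod_Ico_eq_prod_range,
      Fin.prod_univ_eq_prod_range (fun j => x i - b (j + 1)) n]
    simp [add_comm]
  -- assemble
  have hdetN : N.det = Γ.det * U.det := by rw [hNfac, Matrix.det_mul]
  rw [eq_div_iff (by rw [← hden]; exact Finset.prod_ne_zero_iff.mpr fun i _ => hD_ne i)]
  rw [hnum, ← hdetΓ, ← hdetU, ← hden, mul_comm U.det Γ.det, ← hdetN, hdetNM]
  ring
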